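/- Let d ≥ 1 and let S be a Seidel matrix of order n ≥ 2 whose smallest eigenvalue λ₀ has multiplicity n − d ≥ 1, and suppose λ₀² ≥ d + 2. Then n ≤ d(λ₀²−1)/(λ₀²−d), with equality if and only if S has exactly two distinct eigenvalues λ₀ (multiplicity n−d) and −λ₀(n−d)/d (multiplicity d). -/

import Mathlib

open Matrix Finset

lemma sum_eig_eq_trace {n : ℕ} {S : Matrix (Fin n) (Fin n) ℝ} (hH : S.IsHermitian) :
    ∑ i, hH.eigenvalues i = S.trace := by
  have h := hH.spectral_theorem
  set U := (hH.eigenvectorUnitary : Matrix (Fin n) (Fin n) ℝ)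
  have hU : star U * U = 1 := Unitary.coe_star_mul_self _
  calc ∑ i, hH.eigenvalues i
      = (Matrix.diagonal (RCLike.ofReal ∘ hH.eigenvalues) : Matrix (Fin n) (Fin n) ℝ).trace := by
        simp [Matrix.trace_diagonal]
    _ = (star U * U * Matrix.diagonal (RCLike.ofReal ∘ hH.eigenvalues)).trace := by
        rw [hU, Matrix.one_mul]
    _ = (U * Matrix.diagonal (RCLike.ofReal ∘ hH.eigenvalues) * star U).trace :=
        (Matrix.trace_mul_cycle _ _ _).symm
    _ = S.trace := by rw [congrArg Matrix.trace h, Unitary.conjStarAlgAut_apply]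

lemma sum_eig_sq_eq_trace {n : ℕ} {S : Matrix (Fin n) (Fin n) ℝ} (hH : S.IsHermitian) :
    ∑ i, hH.eigenvalues i ^ 2 = (S * S).trace := by
  set U := (hH.eigenvectorUnitary : Matrix (Fin n) (Fin n) ℝ)
  set D := (Matrix.diagonal (RCLike.ofReal ∘ hH.eigenvalues) : Matrix (Fin n) (Fin n) ℝ)
  have hD : star U * S * U = D := by
    have h' := hH.conjStarAlgAut_star_eigenvectorUnitary
    rw [Unitary.conjStarAlgAut_star_apply] at h'; exact h'
  have hU : star U * U = 1 := Unitary.coe_star_mul_self _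
  have hU' : U * star U = 1 := Unitary.coe_mul_star_self _
  calc ∑ i, hH.eigenvalues i ^ 2
      = (D * D).trace := by
        simp [D, Matrix.diagonal_mul_diagonal, Matrix.trace_diagonal, Function.comp, sq]
    _ = (star U * S * U * (star U * S * U)).trace := by rw [hD]
    _ = (star U * (S * (U * star U) * S) * U).trace := by simp only [Matrix.mul_assoc]
    _ = (star U * (S * S) * U).trace := by rw [hU', mul_one]
    _ = (U * star U * (S * S)).trace := Matrix.trace_mul_cycle _ _ _
    _ = (S * S).trace := by rw [hU', Matrix.one_mul]

def IsSeidel {n : ℕ} (S : Matrix (Fin n) (Fin n) ℝ) : Prop :=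
  S.IsSymm ∧ (∀ i, S i i = 0) ∧ ∀ i j, i ≠ j → S i j = 1 ∨ S i j = -1

set_option maxHeartbeats 1000000 in
theorem relative_bound {n d : ℕ} (hd : 1 ≤ d) (hn : 2 ≤ n) (hnd : 1 ≤ n - d) (hdn : d ≤ n)
    (S : Matrix (Fin n) (Fin n) ℝ) (hS : IsSeidel S) (hH : S.IsHermitian)
    (lam0 : ℝ) (hmin : ∀ i, lam0 ≤ hH.eigenvalues i)
    (hmult : (Finset.univ.filter fun i => hH.eigenvalues i = lam0).card = n - d)
    (hl2 : (d : ℝ) + 2 ≤ lam0 ^ 2) :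
    (n : ℝ) ≤ (d : ℝ) * (lam0 ^ 2 - 1) / (lam0 ^ 2 - d) ∧
    ((n : ℝ) = (d : ℝ) * (lam0 ^ 2 - 1) / (lam0 ^ 2 - d) ↔
      ((Finset.univ.filter fun i =>
          hH.eigenvalues i = -lam0 * ((n : ℝ) - d) / d).card = d ∧
        lam0 ≠ -lam0 * ((n : ℝ) - d) / d)) := by
  obtain ⟨hsym, hdiag, hoff⟩ := hS
  have hd0 : (0:ℝ) < d := by exact_mod_cast hd
  have hn0 : (0:ℝ) < n := by positivity
  set eig := hH.eigenvalues with heig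
  -- trace facts
  have hsum : ∑ i, eig i = 0 := by
    rw [heig, sum_eig_eq_trace hH]
    simp [Matrix.trace, Matrix.diag, hdiag]
  have hent : ∀ i j : Fin n, S i j * S j i = if i = j then (0:ℝ) else 1 := by
    intro i j
    by_cases h : i = j
    · subst h; simp [hdiag]
    · have hji : S j i = S i j := hsym.apply i j
      rcases hoff i j h with h1 | h1 <;> rw [hji, h1] <;> simp [h]
  have hsq : ∑ i, eig i ^ 2 = (n:ℝ) * ((n:ℝ) - 1) := by
    rw [heig, sum_eig_sq_eq_trace hH]
    simp only [Matrix.trace, Matrix.diag, Matrix.mul_apply]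
    calc ∑ i : Fin n, ∑ j : Fin n, S i j * S j i
        = ∑ i : Fin n, ∑ j : Fin n, (if i = j then (0:ℝ) else 1) := by
          refine Finset.sum_congr rfl fun i _ => Finset.sum_congr rfl fun j _ => hent i j
      _ = ∑ i : Fin n, ((n:ℝ) - 1) := by
          refine Finset.sum_congr rfl fun i _ => ?_
          have h2 : (∑ j : Fin n, if i = j then (0:ℝ) else 1)
              = ∑ j : Fin n, ((1:ℝ) - if i = j then 1 else 0) := by
            refine Finset.sum_congr rfl fun j _ => ?_
            split <;> norm_num
          rw [h2, Finset.sum_sub_distrib, Finset.sum_ite_eq, Finset.sum_const]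
          simp [Finset.card_univ]
      _ = (n:ℝ) * ((n:ℝ) - 1) := by simp [mul_comm]; ring
  set μ := -lam0 * ((n:ℝ) - d) / d with hμ
  set T := Finset.univ.filter (fun i => eig i = lam0) with hT
  set T' := Finset.univ.filter (fun i => ¬ eig i = lam0) with hT'
  have hcardT' : T'.card = d := by
    have h1 : T.card + T'.card = (Finset.univ : Finset (Fin n)).card :=
      Finset.card_filter_add_card_filter_not _
    rw [Finset.card_univ, Fintype.card_fin, hmult] at h1
    omega
  have hcast : ((n - d : ℕ) : ℝ) = (n:ℝ) - d := Nat.cast_sub hdn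
  have hTsum : ∑ i ∈ T, eig i = ((n:ℝ) - d) * lam0 := by
    rw [Finset.sum_congr rfl (fun i hi => (Finset.mem_filter.mp hi).2),
      Finset.sum_const, hmult, nsmul_eq_mul, hcast]
  have hTsq : ∑ i ∈ T, eig i ^ 2 = ((n:ℝ) - d) * lam0 ^ 2 := by
    rw [Finset.sum_congr rfl (fun i hi => by rw [(Finset.mem_filter.mp hi).2]),
      Finset.sum_const, hmult, nsmul_eq_mul, hcast]
  have hA1 : ∑ i ∈ T', eig i = -(((n:ℝ) - d) * lam0) := by
    have := Finset.sum_filter_add_sum_filter_not Finset.univ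
      (fun i => eig i = lam0) eig
    rw [hsum] at this
    rw [← hT, ← hT'] at this
    linarith [hTsum]
  have hA2 : ∑ i ∈ T', eig i ^ 2 = (n:ℝ)*((n:ℝ)-1) - ((n:ℝ) - d) * lam0 ^ 2 := by
    have := Finset.sum_filter_add_sum_filter_not Finset.univ
      (fun i => eig i = lam0) (fun i => eig i ^ 2)
    rw [hsq] at this
    rw [← hT, ← hT'] at this
    linarith [hTsq]
  set Q := ∑ i ∈ T', (eig i - μ)^2 with hQdef
  have hexp : Q = (∑ i ∈ T', eig i ^ 2) - 2*μ*(∑ i ∈ T', eig i) + d*μ^2 := by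
    rw [hQdef]
    simp only [sub_sq]
    rw [Finset.sum_add_distrib, Finset.sum_sub_distrib, Finset.sum_const, hcardT',
      nsmul_eq_mul]
    have h2 : ∑ i ∈ T', 2 * eig i * μ = 2 * μ * ∑ i ∈ T', eig i := by
      rw [Finset.mul_sum]
      exact Finset.sum_congr rfl fun i _ => by ring
    rw [h2]
  have hQd : Q * d = (n:ℝ) * ((d:ℝ)*(lam0^2-1) - (n:ℝ)*(lam0^2-(d:ℝ))) := by
    rw [hexp, hA1, hA2, hμ]
    field_simp
    ring
  have hQ0 : (0:ℝ) ≤ Q := Finset.sum_nonneg fun i _ => sq_nonneg _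
  have hpos : (0:ℝ) < lam0^2 - d := by linarith
  have hE : (0:ℝ) ≤ (d:ℝ)*(lam0^2-1) - (n:ℝ)*(lam0^2-(d:ℝ)) := by
    have h3 : (d:ℝ)*(lam0^2-1) - (n:ℝ)*(lam0^2-(d:ℝ)) = Q * d / n := by
      rw [hQd]; field_simp
    rw [h3]; positivity
  have hbound : (n : ℝ) ≤ (d : ℝ) * (lam0 ^ 2 - 1) / (lam0 ^ 2 - d) := by
    rw [le_div_iff₀ hpos]; linarith
  have hl0 : lam0 ≠ 0 := by
    intro h; rw [h] at hl2; norm_num at hl2; linarith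
  have hne : lam0 ≠ μ := by
    intro h
    rw [hμ, eq_div_iff hd0.ne'] at h
    have h2 : lam0 * (n:ℝ) = 0 := by ring_nf at h ⊢; linarith [h]
    rcases mul_eq_zero.mp h2 with h3 | h3
    · exact hl0 h3
    · exact hn0.ne' h3
  refine ⟨hbound, ?_, ?_⟩
  · intro heq
    rw [eq_div_iff hpos.ne'] at heq
    have hQz : Q * d = 0 := by rw [hQd, ← heq]; ring
    have hQ0' : Q = 0 := by
      rcases mul_eq_zero.mp hQz with h3 | h3
      · exact h3
      · exact absurd h3 hd0.ne'
    have hall : ∀ i ∈ T', eig i = μ := by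
      intro i hi
      have h0 := (Finset.sum_eq_zero_iff_of_nonneg
        (fun i _ => sq_nonneg (eig i - μ))).mp hQ0' i hi
      have h1 := pow_eq_zero_iff (two_ne_zero) |>.mp h0
      linarith [h1]
    have hset : Finset.univ.filter (fun i => eig i = μ) = T' := by
      apply Finset.Subset.antisymm
      · intro i hi
        rw [Finset.mem_filter] at hi ⊢
        refine ⟨Finset.mem_univ _, ?_⟩
        rw [hi.2]
        exact fun h => hne h.symm
      · intro i hi
        rw [Finset.mem_filter]
        exact ⟨Finset.mem_univ _, hall i hi⟩
    rw [hset, hcardT']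
    exact ⟨rfl, hne⟩
  · rintro ⟨hcard, -⟩
    have hsub : Finset.univ.filter (fun i => eig i = μ) ⊆ T' := by
      intro i hi
      rw [Finset.mem_filter] at hi ⊢
      refine ⟨Finset.mem_univ _, ?_⟩
      rw [hi.2]
      exact fun h => hne h.symm
    have hset : Finset.univ.filter (fun i => eig i = μ) = T' :=
      Finset.eq_of_subset_of_card_le hsub (by rw [hcard, hcardT'])
    have hall : ∀ i ∈ T', eig i = μ := fun i hi => by
      rw [← hset] at hi; exact (Finset.mem_filter.mp hi).2
    have hQ0' : Q = 0 := Finset.sum_eq_zero fun i hi => by rw [hall i hi]; ring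
    have hE0 : (n:ℝ) * (lam0^2-(d:ℝ)) = (d:ℝ)*(lam0^2-1) := by
      have h4 : (0:ℝ) = (n:ℝ) * ((d:ℝ)*(lam0^2-1) - (n:ℝ)*(lam0^2-(d:ℝ))) := by
        rw [← hQd, hQ0', zero_mul]
      have h5 : (d:ℝ)*(lam0^2-1) - (n:ℝ)*(lam0^2-(d:ℝ)) = 0 := by
        rcases mul_eq_zero.mp h4.symm with h6 | h6
        · exact absurd h6 hn0.ne'
        · exact h6
      linarith
    rw [eq_div_iff hpos.ne']
    linarith
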